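/- Let Q ~ χ²(d) (chi-squared with d degrees of freedom). Then for every x ≥ 0, P(Q ≥ d + 2√(d x) + 2x) ≤ exp(−x). -/

import Mathlib

open MeasureTheory ProbabilityTheory

private lemma log_le_half_sub_inv {w : ℝ} (hw : 1 ≤ w) :
    Real.log w ≤ (w - w⁻¹) / 2 := by
  set g : ℝ → ℝ := fun y => (y - y⁻¹) / 2 - Real.log y with hg
  have hderiv : ∀ y : ℝ, 0 < y →
      HasDerivAt g ((1 - -(y ^ 2)⁻¹) / 2 - y⁻¹) y := by
    intro y hy
    exact (((hasDerivAt_id y).sub (hasDerivAt_inv hy.ne')).div_const 2).sub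
      (Real.hasDerivAt_log hy.ne')
  have hmono : MonotoneOn g (Set.Ici (1 : ℝ)) := by
    apply monotoneOn_of_deriv_nonneg (convex_Ici 1)
    · intro y hy
      have hy0 : (0 : ℝ) < y := lt_of_lt_of_le one_pos hy
      exact (hderiv y hy0).continuousAt.continuousWithinAt
    · intro y hy
      rw [interior_Ici] at hy
      exact (hderiv y (lt_trans one_pos hy)).differentiableAt.differentiableWithinAt
    · intro y hy
      rw [interior_Ici] at hy
      have hy0 : (0 : ℝ) < y := lt_trans one_pos hy
      rw [(hderiv y hy0).deriv]
      have h1 : (y ^ 2)⁻¹ = y⁻¹ ^ 2 := by rw [inv_pow]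
      nlinarith [sq_nonneg (1 - y⁻¹)]
  have h01 : (1 : ℝ) ∈ Set.Ici (1 : ℝ) := Set.mem_Ici.mpr le_rfl
  have hwmem : w ∈ Set.Ici (1 : ℝ) := hw
  have := hmono h01 hwmem hw
  simp only [hg, inv_one, sub_self, zero_div, Real.log_one, sub_zero] at this
  linarith

/-- Laurent–Massart upper tail bound for `Q ~ χ²(d)` (i.e. `Gamma(d/2, 1/2)`):
`P(Q ≥ d + 2√(dx) + 2x) ≤ exp(−x)` for all `x ≥ 0`. -/
theorem stmt_9 (d : ℕ) (hd : 1 ≤ d) (x : ℝ) (hx : 0 ≤ x) :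
    (gammaMeasure ((d : ℝ) / 2) (1 / 2))
        {q | (d : ℝ) + 2 * Real.sqrt (d * x) + 2 * x ≤ q} ≤
      ENNReal.ofReal (Real.exp (-x)) := by
  have hdpos : (0 : ℝ) < d := by exact_mod_cast hd
  set a : ℝ := (d : ℝ) / 2 with ha_def
  have ha : 0 < a := by positivity
  set u : ℝ := Real.sqrt ((d : ℝ) * x) / d with hu_def
  have hu0 : 0 ≤ u := by positivity
  have hdu : Real.sqrt ((d : ℝ) * x) = d * u := by
    rw [hu_def, mul_div_assoc', mul_div_cancel_left₀ _ hdpos.ne']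
  have hdu2 : (d : ℝ) * u ^ 2 = x := by
    have hsq : Real.sqrt ((d : ℝ) * x) ^ 2 = (d : ℝ) * x :=
      Real.sq_sqrt (by positivity)
    have : ((d : ℝ) * u) ^ 2 = (d : ℝ) * x := by rw [← hdu]; exact hsq
    nlinarith
  set w : ℝ := 1 + 2 * u with hw_def
  have hw1 : (1 : ℝ) ≤ w := by simp [hw_def]; linarith
  have hw0 : (0 : ℝ) < w := lt_of_lt_of_le one_pos hw1
  set l : ℝ := u / w with hl_def
  have hl0 : 0 ≤ l := by positivity
  set t : ℝ := (d : ℝ) + 2 * Real.sqrt (d * x) + 2 * x with ht_def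
  have ht : t = (d : ℝ) + 2 * ((d : ℝ) * u) + 2 * ((d : ℝ) * u ^ 2) := by
    rw [ht_def, hdu, hdu2]
  have hr' : (0 : ℝ) < 1 / (2 * w) := by positivity
  clear_value u w l t a
  clear hu_def ht_def
  -- pointwise tilting identity
  have hpoint : ∀ q : ℝ,
      ENNReal.ofReal (Real.exp (l * (q - t))) * gammaPDF a (1 / 2) q =
        ENNReal.ofReal (Real.exp (-(l * t)) * w ^ a) * gammaPDF a (1 / (2 * w)) q := by
    intro q
    rcases lt_or_ge q 0 with hq | hq
    · rw [gammaPDF_of_neg hq, gammaPDF_of_neg hq, mul_zero, mul_zero]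
    · rw [gammaPDF_of_nonneg hq, gammaPDF_of_nonneg hq,
        ← ENNReal.ofReal_mul (Real.exp_nonneg _),
        ← ENNReal.ofReal_mul (by positivity)]
      congr 1
      have hpow : w ^ a * (1 / (2 * w)) ^ a = (1 / 2 : ℝ) ^ a := by
        rw [← Real.mul_rpow hw0.le (by positivity)]
        congr 1
        field_simp
      have hexp : Real.exp (l * (q - t)) * Real.exp (-(1 / 2 * q)) =
          Real.exp (-(l * t)) * Real.exp (-(1 / (2 * w) * q)) := by
        rw [← Real.exp_add, ← Real.exp_add]
        congr 1
        rw [hl_def, hw_def, ht]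
        have h2u : (1 : ℝ) + 2 * u ≠ 0 := by positivity
        field_simp
        ring
      calc Real.exp (l * (q - t)) *
            ((1 / 2 : ℝ) ^ a / Real.Gamma a * q ^ (a - 1) * Real.exp (-(1 / 2 * q)))
          = (Real.exp (l * (q - t)) * Real.exp (-(1 / 2 * q))) *
            ((1 / 2 : ℝ) ^ a / Real.Gamma a * q ^ (a - 1)) := by ring
        _ = (Real.exp (-(l * t)) * Real.exp (-(1 / (2 * w) * q))) *
            ((w ^ a * (1 / (2 * w)) ^ a) / Real.Gamma a * q ^ (a - 1)) := by
            rw [hexp, hpow]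
        _ = Real.exp (-(l * t)) * w ^ a *
            ((1 / (2 * w)) ^ a / Real.Gamma a * q ^ (a - 1) *
              Real.exp (-(1 / (2 * w) * q))) := by ring
  have hSm : MeasurableSet {q : ℝ | t ≤ q} := measurableSet_Ici
  have key : (gammaMeasure a (1 / 2)) {q : ℝ | t ≤ q} ≤
      ENNReal.ofReal (Real.exp (-(l * t)) * w ^ a) := by
    calc (gammaMeasure a (1 / 2)) {q : ℝ | t ≤ q}
        = ∫⁻ q in {q : ℝ | t ≤ q}, gammaPDF a (1 / 2) q := by
          rw [gammaMeasure, withDensity_apply _ hSm]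
      _ ≤ ∫⁻ q in {q : ℝ | t ≤ q},
            ENNReal.ofReal (Real.exp (l * (q - t))) * gammaPDF a (1 / 2) q := by
          apply setLIntegral_mono' hSm
          intro q hq
          refine le_mul_of_one_le_left zero_le ?_
          rw [ENNReal.one_le_ofReal]
          exact Real.one_le_exp (by nlinarith [Set.mem_setOf_eq ▸ hq])
      _ ≤ ∫⁻ q, ENNReal.ofReal (Real.exp (l * (q - t))) * gammaPDF a (1 / 2) q :=
          setLIntegral_le_lintegral _ _
      _ = ∫⁻ q, ENNReal.ofReal (Real.exp (-(l * t)) * w ^ a) *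
            gammaPDF a (1 / (2 * w)) q := lintegral_congr hpoint
      _ = ENNReal.ofReal (Real.exp (-(l * t)) * w ^ a) *
            ∫⁻ q, gammaPDF a (1 / (2 * w)) q :=
          lintegral_const_mul' _ _ ENNReal.ofReal_ne_top
      _ = ENNReal.ofReal (Real.exp (-(l * t)) * w ^ a) := by
          rw [lintegral_gammaPDF_eq_one ha hr', mul_one]
  refine key.trans (ENNReal.ofReal_le_ofReal ?_)
  rw [Real.rpow_def_of_pos hw0, ← Real.exp_add, Real.exp_le_exp]
  have hlog : Real.log w ≤ (w - w⁻¹) / 2 := log_le_half_sub_inv hw1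
  have heq : a * ((w - w⁻¹) / 2) + -(l * t) = -x := by
    rw [ht, ← hdu2, ha_def, hl_def, hw_def]
    field_simp
    ring
  have : a * Real.log w ≤ a * ((w - w⁻¹) / 2) :=
    mul_le_mul_of_nonneg_left hlog ha.le
  linarith
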